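/- Under the same functional relations, the quotient identities (1 − F̃₁^{(3)})/(1 − F̃₁^{(0)}) = a^{(3)}/a^{(0)}, (1 − F̃₁^{(4)})/(1 − F̃₁^{(1)}) = a^{(4)}/a^{(1)}, and (z − F̃₁^{(5)}(z))/(z − F̃₁^{(2)}(z)) = a^{(5)}/a^{(2)} hold, and consequently a^{(0)} + a^{(1)} = a^{(3)} + a^{(4)}. -/

import Mathlib

open Complex Filter Bornology Set

noncomputable section

/-- The plane slit along the segment `[0,α³] ⊂ ℝ`. -/
def slitPlane₁ (α : ℝ) : Set ℂ :=
  {z : ℂ | ¬(z.im = 0 ∧ 0 ≤ z.re ∧ z.re ≤ α ^ 3)}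

lemma slitPlane₁_mem_cobounded (α : ℝ) : slitPlane₁ α ∈ cobounded ℂ := by
  have hb : IsBounded {z : ℂ | z.im = 0 ∧ 0 ≤ z.re ∧ z.re ≤ α ^ 3} := by
    apply (Metric.isBounded_closedBall (x := (0:ℂ)) (r := α ^ 3)).subset
    rintro z ⟨him, hre0, hre⟩
    simp only [Metric.mem_closedBall, dist_zero_right]
    have : z = (z.re : ℂ) := Complex.ext rfl (by simp [him])
    rw [this, Complex.norm_real, Real.norm_of_nonneg hre0]
    exact hre
  have : slitPlane₁ α = {z : ℂ | z.im = 0 ∧ 0 ≤ z.re ∧ z.re ≤ α ^ 3}ᶜ := rfl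
  rw [this]
  exact hb.compl

lemma tendsto_one_of_laurent {f : ℂ → ℂ} {c : ℂ}
    (h : Tendsto (fun z => z * (f z - 1)) (cobounded ℂ) (nhds c)) :
    Tendsto f (cobounded ℂ) (nhds 1) := by
  have h2 : Tendsto (fun z : ℂ => z * (f z - 1) * z⁻¹ + 1) (cobounded ℂ) (nhds (c * 0 + 1)) :=
    (h.mul tendsto_inv₀_cobounded).add tendsto_const_nhds
  rw [mul_zero, zero_add] at h2
  refine h2.congr' ?_
  filter_upwards [eventually_ne_cobounded (0:ℂ)] with z hz
  field_simp
  ring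

/-- under the same functional relations (together with the product
relations `F̃₁⁽⁰⁾F̃₁⁽¹⁾ = F̃₁⁽³⁾F̃₁⁽⁴⁾` etc. and the Laurent expansions
`F̃₁⁽ⁱ⁾ = 1 - a⁽ⁱ⁾/z + o(1/z)` for `i ∈ {0,1,3,4}`,
`F̃₁⁽ⁱ⁾ = z - a⁽ⁱ⁾ + o(1)` for `i ∈ {2,5}`), the quotient identities
`(1 - F̃₁⁽³⁾)/(1 - F̃₁⁽⁰⁾) = a⁽³⁾/a⁽⁰⁾`, `(1 - F̃₁⁽⁴⁾)/(1 - F̃₁⁽¹⁾) = a⁽⁴⁾/a⁽¹⁾`,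
`(z - F̃₁⁽⁵⁾)/(z - F̃₁⁽²⁾) = a⁽⁵⁾/a⁽²⁾` hold, and `a⁽⁰⁾ + a⁽¹⁾ = a⁽³⁾ + a⁽⁴⁾`. -/
theorem statement13 (α : ℝ) (hα : 0 < α)
    (F : Fin 6 → ℂ → ℂ) (A : Fin 6 → ℝ)
    (hhol : ∀ i, DifferentiableOn ℂ (F i) (slitPlane₁ α))
    (hnv : ∀ i, ∀ z ∈ slitPlane₁ α, F i z ≠ 0)
    (hApos : ∀ i, 0 < A i)
    (hrel1 : ∀ i ∈ ({0, 1, 3, 4} : Finset (Fin 6)), ∀ z ∈ slitPlane₁ α,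
      (A i : ℂ) = F (i - 2) z * F (i - 1) z * (1 - F i z))
    (hrel2 : ∀ i ∈ ({2, 5} : Finset (Fin 6)), ∀ z ∈ slitPlane₁ α,
      (A i : ℂ) = F (i - 2) z * F (i - 1) z * (z - F i z))
    (hlaurent1 : ∀ i ∈ ({0, 1, 3, 4} : Finset (Fin 6)),
      Tendsto (fun z : ℂ => z * (F i z - 1)) (cobounded ℂ) (nhds (-(A i : ℂ))))
    (hlaurent2 : ∀ i ∈ ({2, 5} : Finset (Fin 6)),
      Tendsto (fun z : ℂ => F i z - z) (cobounded ℂ) (nhds (-(A i : ℂ))))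
    (hprod1 : ∀ z ∈ slitPlane₁ α, F 0 z * F 1 z = F 3 z * F 4 z)
    (hprod2 : ∀ z ∈ slitPlane₁ α, F 1 z * F 2 z = F 4 z * F 5 z)
    (hprod3 : ∀ z ∈ slitPlane₁ α, F 2 z * F 3 z = F 5 z * F 0 z) :
    (∀ z ∈ slitPlane₁ α,
      (1 - F 3 z) / (1 - F 0 z) = (A 3 : ℂ) / (A 0 : ℂ) ∧
      (1 - F 4 z) / (1 - F 1 z) = (A 4 : ℂ) / (A 1 : ℂ) ∧
      (z - F 5 z) / (z - F 2 z) = (A 5 : ℂ) / (A 2 : ℂ)) ∧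
    A 0 + A 1 = A 3 + A 4 := by
  have hA : ∀ i : Fin 6, (A i : ℂ) ≠ 0 := fun i => by
    exact_mod_cast (hApos i).ne'
  constructor
  · intro z hz
    have h0 := hrel1 0 (by decide) z hz
    have h1 := hrel1 1 (by decide) z hz
    have h3 := hrel1 3 (by decide) z hz
    have h4 := hrel1 4 (by decide) z hz
    have h2 := hrel2 2 (by decide) z hz
    have h5 := hrel2 5 (by decide) z hz
    rw [show ((0:Fin 6) - 2) = 4 by decide, show ((0:Fin 6) - 1) = 5 by decide] at h0
    rw [show ((1:Fin 6) - 2) = 5 by decide, show ((1:Fin 6) - 1) = 0 by decide] at h1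
    rw [show ((3:Fin 6) - 2) = 1 by decide, show ((3:Fin 6) - 1) = 2 by decide] at h3
    rw [show ((4:Fin 6) - 2) = 2 by decide, show ((4:Fin 6) - 1) = 3 by decide] at h4
    rw [show ((2:Fin 6) - 2) = 0 by decide, show ((2:Fin 6) - 1) = 1 by decide] at h2
    rw [show ((5:Fin 6) - 2) = 3 by decide, show ((5:Fin 6) - 1) = 4 by decide] at h5
    have hq1 := hprod1 z hz
    have hq2 := hprod2 z hz
    have hq3 := hprod3 z hz
    have hd0 : (1 : ℂ) - F 0 z ≠ 0 := by
      intro h; exact hA 0 (by rw [h0, h, mul_zero])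
    have hd1 : (1 : ℂ) - F 1 z ≠ 0 := by
      intro h; exact hA 1 (by rw [h1, h, mul_zero])
    have hd2 : z - F 2 z ≠ 0 := by
      intro h; exact hA 2 (by rw [h2, h, mul_zero])
    refine ⟨?_, ?_, ?_⟩
    · rw [div_eq_div_iff hd0 (hA 0)]
      linear_combination (1 - F 3 z) * h0 - (1 - F 0 z) * h3 -
        (1 - F 0 z) * (1 - F 3 z) * hq2
    · rw [div_eq_div_iff hd1 (hA 1)]
      linear_combination (1 - F 4 z) * h1 - (1 - F 1 z) * h4 -
        (1 - F 1 z) * (1 - F 4 z) * hq3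
    · rw [div_eq_div_iff hd2 (hA 2)]
      linear_combination (z - F 5 z) * h2 - (z - F 2 z) * h5 +
        (z - F 2 z) * (z - F 5 z) * hq1
  · have l0 := hlaurent1 0 (by decide)
    have l1 := hlaurent1 1 (by decide)
    have l3 := hlaurent1 3 (by decide)
    have l4 := hlaurent1 4 (by decide)
    have hF1 := tendsto_one_of_laurent l1
    have hF4 := tendsto_one_of_laurent l4
    have hG01 : Tendsto (fun z : ℂ => z * (F 0 z * F 1 z - 1)) (cobounded ℂ)
        (nhds (-((A 0 : ℂ) + A 1))) := by
      have := ((l0.mul hF1).add l1)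
      rw [show -(A 0 : ℂ) * 1 + -(A 1 : ℂ) = -((A 0 : ℂ) + A 1) by ring] at this
      exact this.congr (fun z => by ring)
    have hG34 : Tendsto (fun z : ℂ => z * (F 3 z * F 4 z - 1)) (cobounded ℂ)
        (nhds (-((A 3 : ℂ) + A 4))) := by
      have := ((l3.mul hF4).add l4)
      rw [show -(A 3 : ℂ) * 1 + -(A 4 : ℂ) = -((A 3 : ℂ) + A 4) by ring] at this
      exact this.congr (fun z => by ring)
    have heq : (fun z : ℂ => z * (F 0 z * F 1 z - 1)) =ᶠ[cobounded ℂ]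
        (fun z : ℂ => z * (F 3 z * F 4 z - 1)) := by
      filter_upwards [slitPlane₁_mem_cobounded α] with z hz
      rw [hprod1 z hz]
    have huniq : -((A 0 : ℂ) + A 1) = -((A 3 : ℂ) + A 4) :=
      tendsto_nhds_unique (hG01.congr' heq) hG34
    have : ((A 0 + A 1 : ℝ) : ℂ) = ((A 3 + A 4 : ℝ) : ℂ) := by
      push_cast
      exact neg_injective huniq
    exact_mod_cast this

end
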